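/- arXiv:2505.15163 — 4 statements merged into one kernel-verified Lean document; each statement's English description precedes it below -/
import Mathlib

section
/- A finite p-group P satisfies Ω₁Z(P) ≤ Φ(P) if and only if for every nontrivial normal subgroup N of P one has N ∩ Φ(P) ≠ 1. -/
/-- A finite `p`-group `P` satisfies `Ω₁Z(P) ≤ Φ(P)` if and only if every nontrivial normal
subgroup `N` of `P` satisfies `N ⊓ Φ(P) ≠ ⊥`. -/
theorem atoric_iff_normal_meets_frattini {p : ℕ} [Fact p.Prime] {P : Type*} [Group P]
    [Finite P] (hP : IsPGroup p P) :
    (∀ g ∈ Subgroup.center P, g ^ p = 1 → g ∈ frattini P) ↔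
      ∀ N : Subgroup P, N.Normal → N ≠ ⊥ → N ⊓ frattini P ≠ ⊥ := by
  have hp := Fact.out (p := p.Prime)
  constructor
  · intro h N hN hNbot
    haveI := hN
    have hNnt : Nontrivial N := (Subgroup.nontrivial_iff_ne_bot N).mpr hNbot
    have hPG : IsPGroup p (ConjAct P) := hP.of_equiv ConjAct.toConjAct
    have hpN : p ∣ Nat.card N := by
      obtain ⟨n, hn0, hn⟩ := (hP.to_subgroup N).nontrivial_iff_card.mp hNnt
      exact hn ▸ dvd_pow_self _ hn0.ne'
    have h1 : (1 : N) ∈ MulAction.fixedPoints (ConjAct P) N := by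
      intro g
      ext
      simp [ConjAct.Subgroup.val_conj_smul]
    obtain ⟨b, hb, hb1⟩ :=
      hPG.exists_fixed_point_of_prime_dvd_card_of_fixed_point (α := N) hpN h1
    have hbc : (b : P) ∈ Subgroup.center P := by
      rw [Subgroup.mem_center_iff]
      intro g
      have this : g * (b : P) * g⁻¹ = (b : P) := congrArg Subtype.val (hb (ConjAct.toConjAct g))
      calc g * b = g * b * g⁻¹ * g := by group
        _ = (b : P) * g := by rw [this]
    have hbne : (b : P) ≠ 1 := by
      intro hh
      exact hb1 (Subtype.ext hh.symm)
    obtain ⟨k, hk⟩ := IsPGroup.iff_orderOf.mp hP (b : P)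
    have hk0 : k ≠ 0 := by
      rintro rfl
      exact hbne (orderOf_eq_one_iff.mp (by simpa using hk))
    set y : P := (b : P) ^ p ^ (k - 1) with hy
    have hyne : y ≠ 1 := by
      intro hh
      have := orderOf_dvd_of_pow_eq_one hh
      rw [hk] at this
      exact absurd (Nat.pow_dvd_pow_iff_le_right hp.one_lt |>.mp this)
        (by omega)
    have hyp : y ^ p = 1 := by
      rw [hy, ← pow_mul, ← pow_succ, Nat.sub_add_cancel (Nat.one_le_iff_ne_zero.mpr hk0), ← hk]
      exact pow_orderOf_eq_one _
    have hymem : y ∈ N ⊓ frattini P :=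
      ⟨N.pow_mem b.2 _, h y (Subgroup.pow_mem _ hbc _) hyp⟩
    intro heq
    rw [heq, Subgroup.mem_bot] at hymem
    exact hyne hymem
  · intro h g hg hgp
    by_cases hgne : g = 1
    · subst hgne; exact Subgroup.one_mem _
    have hN : (Subgroup.zpowers g).Normal := by
      constructor
      intro x hx c
      obtain ⟨n, rfl⟩ := hx
      have hxc : g ^ n ∈ Subgroup.center P := Subgroup.zpow_mem _ hg _
      have : c * g ^ n * c⁻¹ = g ^ n := by
        rw [Subgroup.mem_center_iff.mp hxc c]
        group
      rw [this]
      exact ⟨n, rfl⟩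
    have hbot := h _ hN (Subgroup.zpowers_ne_bot.mpr hgne)
    obtain ⟨⟨x, hxN, hxF⟩, hx1⟩ := Subgroup.ne_bot_iff_exists_ne_one.mp hbot
    have hx1' : x ≠ 1 := by
      intro hh
      exact hx1 (Subtype.ext hh)
    obtain ⟨n, rfl⟩ := hxN
    have hog : orderOf g = p := orderOf_eq_prime hgp hgne
    have hnd : ¬ ((p : ℤ) ∣ n) := by
      intro hd
      apply hx1'
      rw [← orderOf_dvd_iff_zpow_eq_one, hog]
      exact hd
    have hcop : IsCoprime (p : ℤ) n :=
      ((Nat.prime_iff_prime_int.mp hp).coprime_iff_not_dvd).mpr hnd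
    obtain ⟨a, b, hab⟩ := hcop
    have hgx : g = (g ^ n) ^ b := by
      calc g = g ^ (a * (p : ℤ) + b * n) := by rw [hab, zpow_one]
        _ = (g ^ (p : ℤ)) ^ a * (g ^ n) ^ b := by
            rw [zpow_add, mul_comm a ((p : ℤ)), mul_comm b n, zpow_mul, zpow_mul]
        _ = (g ^ n) ^ b := by
            rw [zpow_natCast, hgp, one_zpow, one_mul]
    rw [hgx]
    exact Subgroup.zpow_mem _ hxF _
end

section
/- A finite p-group P admits a nontrivial direct factor which is elementary abelian (P ≅ E × Q with E nontrivial elementary abelian) if and only if there exists a nontrivial normal subgroup N of P with N ∩ Φ(P) = 1. -/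
open Subgroup Pointwise

section Aux

variable {G : Type*} [Group G]

/-- Elements of `F ⊔ ⟨g⟩` when `g` commutes with everything in `F`. -/
lemma mem_sup_zpowers_aux {F : Subgroup G} {g : G} (hc : ∀ f ∈ F, Commute f g)
    {y : G} (hy : y ∈ F ⊔ Subgroup.zpowers g) : ∃ f ∈ F, ∃ k : ℤ, y = f * g ^ k := by
  rw [Subgroup.zpowers_eq_closure, ← Subgroup.closure_eq F, ← Subgroup.closure_union] at hy
  induction hy using Subgroup.closure_induction with
  | mem x hx =>
    rcases hx with hx | hx
    · exact ⟨x, hx, 0, by simp⟩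
    · rw [Set.mem_singleton_iff] at hx
      exact ⟨1, F.one_mem, 1, by simp [hx]⟩
  | one => exact ⟨1, F.one_mem, 0, by simp⟩
  | mul x y hx hy ihx ihy =>
    obtain ⟨f1, hf1, k1, rfl⟩ := ihx
    obtain ⟨f2, hf2, k2, rfl⟩ := ihy
    refine ⟨f1 * f2, F.mul_mem hf1 hf2, k1 + k2, ?_⟩
    have h : g ^ k1 * f2 = f2 * g ^ k1 := (((hc f2 hf2).zpow_right k1).symm).eq
    calc f1 * g ^ k1 * (f2 * g ^ k2) = f1 * (g ^ k1 * f2) * g ^ k2 := by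
          simp [mul_assoc]
      _ = f1 * (f2 * g ^ k1) * g ^ k2 := by rw [h]
      _ = f1 * f2 * g ^ (k1 + k2) := by simp [mul_assoc, zpow_add]
  | inv x hx ihx =>
    obtain ⟨f, hf, k, rfl⟩ := ihx
    refine ⟨f⁻¹, F.inv_mem hf, -k, ?_⟩
    have h : (g ^ k)⁻¹ * f⁻¹ = f⁻¹ * (g ^ k)⁻¹ :=
      ((((hc f hf).inv_left).zpow_right k).inv_right.symm).eq
    rw [mul_inv_rev, h, zpow_neg]

/-- A nontrivial normal subgroup of a finite `p`-group meets the center nontrivially. -/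
lemma aux_meet_center {p : ℕ} [Fact p.Prime] {P : Type*} [Group P] [Finite P]
    (hP : IsPGroup p P) (N : Subgroup P) (hN : N.Normal) (hbot : N ≠ ⊥) :
    ∃ x : P, x ∈ N ∧ x ∈ Subgroup.center P ∧ x ≠ 1 := by
  haveI := hN
  have hPG : IsPGroup p (ConjAct P) := hP.of_equiv ConjAct.toConjAct
  have hNN : Nontrivial N := N.nontrivial_iff_ne_bot.mpr hbot
  have hcard : p ∣ Nat.card N := by
    obtain ⟨n, hn0, hn⟩ := (hP.to_subgroup N).nontrivial_iff_card.mp hNN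
    exact hn ▸ dvd_pow_self _ hn0.ne'
  have hone : (1 : N) ∈ MulAction.fixedPoints (ConjAct P) N := fun g => smul_one g
  obtain ⟨b, hbfix, hb1⟩ :=
    hPG.exists_fixed_point_of_prime_dvd_card_of_fixed_point (α := N) hcard hone
  refine ⟨(b : P), b.2, ?_, ?_⟩
  · rw [Subgroup.mem_center_iff]
    intro g
    have := hbfix (ConjAct.toConjAct g)
    have hv : (g * b * g⁻¹ : P) = b := by
      have h2 := congrArg (Subtype.val) this
      rw [ConjAct.Subgroup.val_conj_smul, ConjAct.toConjAct_smul] at h2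
      exact h2
    calc g * b = (g * b * g⁻¹) * g := by group
      _ = b * g := by rw [hv]
  · intro h
    exact hb1 (Subtype.ext h.symm)

/-- Every maximal subgroup of a finite `p`-group contains all `p`-th powers
and all commutators. -/
lemma aux_coatom {p : ℕ} [Fact p.Prime] {P : Type*} [Group P] [Finite P]
    (hP : IsPGroup p P) {M : Subgroup P} (hM : IsCoatom M) :
    (∀ x : P, x ^ p ∈ M) ∧ (∀ a b : P, a * b * a⁻¹ * b⁻¹ ∈ M) := by
  haveI : Group.IsNilpotent P := hP.isNilpotent
  haveI hMn : M.Normal :=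
    Subgroup.NormalizerCondition.normal_of_coatom M normalizerCondition_of_isNilpotent hM
  have hQp : IsPGroup p (P ⧸ M) := hP.to_quotient M
  -- every subgroup of the quotient is ⊥ or ⊤
  have hsub : ∀ S : Subgroup (P ⧸ M), S = ⊥ ∨ S = ⊤ := by
    intro S
    have h1 : M ≤ S.comap (QuotientGroup.mk' M) := by
      intro m hm
      rw [Subgroup.mem_comap]
      have : (QuotientGroup.mk' M) m = 1 := (QuotientGroup.eq_one_iff m).mpr hm
      rw [this]; exact S.one_mem
    have hmap : S = Subgroup.map (QuotientGroup.mk' M) (S.comap (QuotientGroup.mk' M)) :=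
      (Subgroup.map_comap_eq_self_of_surjective (QuotientGroup.mk'_surjective M) S).symm
    rcases eq_or_lt_of_le h1 with h | h
    · left
      rw [hmap, ← h]
      rw [Subgroup.map_eq_bot_iff, QuotientGroup.ker_mk']
    · right
      rw [hmap, hM.2 _ h]
      exact Subgroup.map_top_of_surjective _ (QuotientGroup.mk'_surjective M)
  have hnt : Nontrivial (P ⧸ M) := by
    obtain ⟨x, hx⟩ : ∃ x : P, x ∉ M := by
      by_contra h
      push_neg at h
      exact hM.1 ((Subgroup.eq_top_iff' M).mpr h)
    exact ⟨⟨(x : P ⧸ M), 1, by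
      rw [ne_eq, QuotientGroup.eq_one_iff]; exact hx⟩⟩
  obtain ⟨n, hn0, hn⟩ := hQp.nontrivial_iff_card.mp hnt
  have hcard : Nat.card (P ⧸ M) = p := by
    rcases Nat.lt_or_ge n 2 with h2 | h2
    · have hn1 : n = 1 := by omega
      rw [hn1, pow_one] at hn
      exact hn
    · exfalso
      obtain ⟨K, hK⟩ := Sylow.exists_subgroup_card_pow_prime (G := P ⧸ M) p (n := 1)
        (by rw [hn]; exact pow_dvd_pow p (by omega))
      rcases hsub K with rfl | rfl
      · rw [Subgroup.card_bot, pow_one] at hK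
        exact (Fact.out (p := p.Prime)).one_lt.ne hK
      · rw [Subgroup.card_top, hn, pow_one] at hK
        have h1 : p < p ^ n := by
          have := Nat.pow_lt_pow_right (Fact.out (p := p.Prime)).one_lt (show 1 < n by omega)
          simpa using this
        omega
  constructor
  · intro x
    rw [← QuotientGroup.eq_one_iff (x ^ p)]
    have : ((x ^ p : P) : P ⧸ M) = ((x : P ⧸ M)) ^ p := by
      simp
    rw [this, ← hcard]
    exact pow_card_eq_one'
  · intro a b
    haveI : IsCyclic (P ⧸ M) := isCyclic_of_prime_card hcard
    letI : CommGroup (P ⧸ M) := IsCyclic.commGroup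
    rw [← QuotientGroup.eq_one_iff]
    have : ((a * b * a⁻¹ * b⁻¹ : P) : P ⧸ M)
        = (a : P ⧸ M) * (b : P ⧸ M) * (a : P ⧸ M)⁻¹ * (b : P ⧸ M)⁻¹ := by simp
    rw [this, mul_comm (a : P ⧸ M) (b : P ⧸ M)]
    group

/-- In a finite `p`-group, `p`-th powers and commutators lie in the Frattini subgroup. -/
lemma aux_frattini {p : ℕ} [Fact p.Prime] {P : Type*} [Group P] [Finite P]
    (hP : IsPGroup p P) :
    (∀ x : P, x ^ p ∈ frattini P) ∧ (∀ a b : P, a * b * a⁻¹ * b⁻¹ ∈ frattini P) := by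
  have key : ∀ x : P, (∀ M : Subgroup P, IsCoatom M → x ∈ M) → x ∈ frattini P := by
    intro x hx
    simp only [frattini, Order.radical, Subgroup.mem_iInf, Set.mem_setOf_eq]
    intro M hM
    exact hx M hM
  exact ⟨fun x => key _ (fun M hM => (aux_coatom hP hM).1 x),
    fun a b => key _ (fun M hM => (aux_coatom hP hM).2 a b)⟩

end Aux

/-- A finite `p`-group `P` admits a nontrivial elementary abelian direct factor
(`P ≅ E × Q` internally, with `E` nontrivial elementary abelian) if and only if there is a
nontrivial normal subgroup `N` of `P` with `N ⊓ Φ(P) = ⊥`. -/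
theorem elementary_abelian_direct_factor_iff {p : ℕ} [Fact p.Prime] {P : Type*} [Group P]
    [Finite P] (hP : IsPGroup p P) :
    (∃ E Q : Subgroup P, E.Normal ∧ Q.Normal ∧ E ⊓ Q = ⊥ ∧ E ⊔ Q = ⊤ ∧ E ≠ ⊥ ∧
        (∀ x ∈ E, ∀ y ∈ E, x * y = y * x) ∧ (∀ x ∈ E, x ^ p = 1)) ↔
      ∃ N : Subgroup P, N.Normal ∧ N ≠ ⊥ ∧ N ⊓ frattini P = ⊥ := by
  obtain ⟨hpow, hcommut⟩ := aux_frattini hP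
  have hp : p.Prime := Fact.out
  constructor
  · rintro ⟨E, Q, hEn, hQn, hEQ, hsup, hEbot, hcomm, hexp⟩
    haveI := hQn
    refine ⟨E, hEn, hEbot, ?_⟩
    rw [eq_bot_iff]
    rintro x ⟨hxE, hxFr⟩
    rw [Subgroup.mem_bot]
    by_contra hx1
    -- choose F ≤ E maximal not containing x
    set S : Set (Subgroup P) := {F : Subgroup P | F ≤ E ∧ x ∉ F} with hS
    haveI : Finite (Subgroup P) :=
      Finite.of_injective (fun H : Subgroup P => (H : Set P)) SetLike.coe_injective
    have hbotS : (⊥ : Subgroup P) ∈ S := ⟨bot_le, by simpa [Subgroup.mem_bot] using hx1⟩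
    obtain ⟨F, hFS, hFmax⟩ := Set.Finite.exists_maximalFor id S (Set.toFinite S) ⟨⊥, hbotS⟩
    obtain ⟨hFE, hxF⟩ := hFS
    -- key claim
    have key : ∀ h : P, h ∈ E → h ∉ F →
        x ∈ F ⊔ Subgroup.zpowers h ∧ h ∈ F ⊔ Subgroup.zpowers x := by
      intro h hhE hhF
      have hle : F ⊔ Subgroup.zpowers h ≤ E :=
        sup_le hFE ((Subgroup.zpowers_le).mpr hhE)
      have hxmem : x ∈ F ⊔ Subgroup.zpowers h := by
        by_contra hxn
        have heq : F = F ⊔ Subgroup.zpowers h :=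
          le_antisymm le_sup_left (hFmax (j := F ⊔ Subgroup.zpowers h) ⟨hle, hxn⟩ le_sup_left)
        apply hhF
        rw [heq]
        exact Subgroup.mem_sup_right (Subgroup.mem_zpowers h)
      refine ⟨hxmem, ?_⟩
      obtain ⟨f, hf, k, hxk⟩ := mem_sup_zpowers_aux
        (fun f hf => (hcomm f (hFE hf) h hhE : Commute f h)) hxmem
      have hpk : ¬ ((p : ℤ) ∣ k) := by
        intro ⟨m, hm⟩
        apply hxF
        have : h ^ k = 1 := by
          rw [hm, zpow_mul, zpow_natCast, hexp h hhE, one_zpow]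
        rw [hxk, this, mul_one]
        exact hf
      -- gcd argument
      have hcop : IsCoprime (k : ℤ) (p : ℤ) := by
        rw [Int.isCoprime_iff_gcd_eq_one, Int.gcd]
        have : ¬ (p ∣ k.natAbs) := by
          intro hd
          exact hpk (Int.natCast_dvd_natCast.mpr hd |>.trans (Int.natAbs_dvd.mpr dvd_rfl))
        simpa [Nat.coprime_comm] using (Nat.Prime.coprime_iff_not_dvd hp).mpr this
      obtain ⟨a, b, hab⟩ := hcop
      have hhk : h ^ k ∈ F ⊔ Subgroup.zpowers x := by
        have : h ^ k = f⁻¹ * x := by rw [hxk]; group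
        rw [this]
        exact mul_mem (Subgroup.mem_sup_left (F.inv_mem hf))
          (Subgroup.mem_sup_right (Subgroup.mem_zpowers x))
      have hh : h = (h ^ k) ^ a * (h ^ (p : ℤ)) ^ b := by
        rw [← zpow_mul, ← zpow_mul, ← zpow_add, mul_comm k a, mul_comm (p : ℤ) b, hab, zpow_one]
      rw [hh]
      have hp1 : h ^ (p : ℤ) = 1 := by rw [zpow_natCast]; exact hexp h hhE
      rw [hp1, one_zpow, mul_one]
      exact zpow_mem hhk a
    -- F is "co-atomic inside E": any subgroup strictly between F and E is E
    have Cl2 : ∀ F' : Subgroup P, F' ≤ E → F < F' → F' = E := by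
      intro F' hF'E hlt
      obtain ⟨g, hgF', hgF⟩ := SetLike.exists_of_lt hlt
      have hgE : g ∈ E := hF'E hgF'
      have hxF' : x ∈ F' := by
        have := (key g hgE hgF).1
        exact (sup_le hlt.le ((Subgroup.zpowers_le).mpr hgF')) this
      refine le_antisymm hF'E ?_
      intro h hhE
      by_cases hhF : h ∈ F
      · exact hlt.le hhF
      · have := (key h hhE hhF).2
        exact (sup_le hlt.le ((Subgroup.zpowers_le).mpr hxF')) this
    -- M := Q ⊔ F is a coatom avoiding x
    have hxM : x ∉ Q ⊔ F := by
      intro hx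
      have hx' : x ∈ ((Q : Set P) * (F : Set P)) := by
        rw [← Subgroup.normal_mul]; exact hx
      obtain ⟨q, hq, f, hf, hqf⟩ := Set.mem_mul.mp hx'
      have hqE : q ∈ E := by
        have : q = x * f⁻¹ := by rw [← hqf]; group
        rw [this]
        exact E.mul_mem hxE (E.inv_mem (hFE hf))
      have : q ∈ E ⊓ Q := ⟨hqE, hq⟩
      rw [hEQ, Subgroup.mem_bot] at this
      apply hxF
      rw [← hqf, this, one_mul]
      exact hf
    have hcoatom : IsCoatom (Q ⊔ F) := by
      constructor
      · intro h
        exact hxM (h ▸ Subgroup.mem_top x)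
      · intro K hMK
        have hQK : Q ≤ K := le_sup_left.trans hMK.le
        have hFK : F ≤ K := le_sup_right.trans hMK.le
        have hKle : K ≤ Q ⊔ (K ⊓ E) := by
          intro k hk
          have hk' : k ∈ ((Q : Set P) * (E : Set P)) := by
            rw [← Subgroup.normal_mul, sup_comm, hsup]; trivial
          obtain ⟨q, hq, e, he, hqe⟩ := Set.mem_mul.mp hk'
          have heK : e ∈ K := by
            have : e = q⁻¹ * k := by rw [← hqe]; group
            rw [this]; exact K.mul_mem (K.inv_mem (hQK hq)) hk
          rw [← hqe]
          exact mul_mem (Subgroup.mem_sup_left hq) (Subgroup.mem_sup_right ⟨heK, he⟩)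
        have hFle : F ≤ K ⊓ E := le_inf hFK hFE
        rcases eq_or_lt_of_le hFle with heq | hlt
        · exfalso
          have : K ≤ Q ⊔ F := by rw [heq]; exact hKle
          exact hMK.not_ge this
        · have hKE : K ⊓ E = E := Cl2 _ inf_le_right hlt
          have hEK : E ≤ K := hKE ▸ inf_le_left
          exact le_antisymm le_top (hsup ▸ sup_le hEK hQK)
    exact hxM (frattini_le_coatom hcoatom hxFr)
  · rintro ⟨N, hNn, hNbot, hNfr⟩
    haveI := hNn
    obtain ⟨z, hzN, hzC, hz1⟩ := aux_meet_center hP N hNn hNbot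
    set E : Subgroup P := N ⊓ Subgroup.center P with hE
    have hEN : E ≤ N := inf_le_left
    have hEC : E ≤ Subgroup.center P := inf_le_right
    have hEfr : E ⊓ frattini P = ⊥ := by
      rw [eq_bot_iff, ← hNfr]
      exact inf_le_inf_right _ hEN
    -- find a maximal Q containing the Frattini subgroup with Q ⊓ E = ⊥
    set S : Set (Subgroup P) := {Q : Subgroup P | frattini P ≤ Q ∧ Q ⊓ E = ⊥} with hS
    haveI : Finite (Subgroup P) :=
      Finite.of_injective (fun H : Subgroup P => (H : Set P)) SetLike.coe_injective
    have hfrS : frattini P ∈ S := ⟨le_rfl, by rw [inf_comm, eq_bot_iff, ← hEfr]⟩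
    obtain ⟨Q, hQS, hQmax⟩ := Set.Finite.exists_maximalFor id S (Set.toFinite S) ⟨_, hfrS⟩
    obtain ⟨hfrQ, hQE⟩ := hQS
    have hQn : Q.Normal := by
      refine ⟨fun n hn g => ?_⟩
      have h1 : g * n * g⁻¹ * n⁻¹ ∈ Q := hfrQ (hcommut g n)
      have h2 : g * n * g⁻¹ = (g * n * g⁻¹ * n⁻¹) * n := by group
      rw [h2]
      exact Q.mul_mem h1 hn
    haveI := hQn
    have hQEsup : Q ⊔ E = ⊤ := by
      by_contra htop
      obtain ⟨g, hg⟩ : ∃ g : P, g ∉ Q ⊔ E := by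
        by_contra h
        push_neg at h
        exact htop ((Subgroup.eq_top_iff' (Q ⊔ E)).mpr h)
      have hgQ : g ∉ Q := fun h => hg (Subgroup.mem_sup_left h)
      have hgpQ : g ^ p ∈ Q := hfrQ (hpow g)
      -- Q ⊔ ⟨g⟩ still intersects E trivially
      have hQ' : (Q ⊔ Subgroup.zpowers g) ⊓ E = ⊥ := by
        rw [eq_bot_iff]
        rintro e ⟨he1, he2⟩
        rw [Subgroup.mem_bot]
        have he1' : e ∈ ((Q : Set P) * (Subgroup.zpowers g : Set P)) := by
          rw [← Subgroup.normal_mul]; exact he1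
        obtain ⟨q, hq, y, hy, hqy⟩ := Set.mem_mul.mp he1'
        obtain ⟨k, hk⟩ := Subgroup.mem_zpowers_iff.mp hy
        by_cases hdvd : (p : ℤ) ∣ k
        · obtain ⟨m, hm⟩ := hdvd
          have hyQ : y ∈ Q := by
            rw [← hk, hm, zpow_mul, zpow_natCast]
            exact zpow_mem hgpQ m
          have : e ∈ Q ⊓ E := ⟨by rw [← hqy]; exact Q.mul_mem hq hyQ, he2⟩
          rw [hQE, Subgroup.mem_bot] at this
          exact this
        · exfalso
          apply hg
          have hcop : IsCoprime (k : ℤ) (p : ℤ) := by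
            rw [Int.isCoprime_iff_gcd_eq_one, Int.gcd]
            have : ¬ (p ∣ k.natAbs) := by
              intro hd
              exact hdvd (Int.natCast_dvd_natCast.mpr hd |>.trans (Int.natAbs_dvd.mpr dvd_rfl))
            simpa [Nat.coprime_comm] using (Nat.Prime.coprime_iff_not_dvd hp).mpr this
          obtain ⟨a, b, hab⟩ := hcop
          have hgk : g ^ k ∈ Q ⊔ E := by
            have : g ^ k = q⁻¹ * e := by rw [← hk] at hqy; rw [← hqy]; group
            rw [this]
            exact mul_mem (Subgroup.mem_sup_left (Q.inv_mem hq)) (Subgroup.mem_sup_right he2)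
          have h1 : g = (g ^ k) ^ a * (g ^ (p : ℤ)) ^ b := by
            rw [← zpow_mul, ← zpow_mul, ← zpow_add, mul_comm k a, mul_comm (p : ℤ) b, hab,
              zpow_one]
          rw [h1]
          refine mul_mem (zpow_mem hgk a) ?_
          have hgp : g ^ (p : ℤ) ∈ Q := by rw [zpow_natCast]; exact hgpQ
          exact zpow_mem (Subgroup.mem_sup_left hgp) b
      have hmem : Q ⊔ Subgroup.zpowers g ∈ S := ⟨hfrQ.trans le_sup_left, hQ'⟩
      have heq : Q = Q ⊔ Subgroup.zpowers g := le_antisymm le_sup_left (hQmax hmem le_sup_left)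
      apply hgQ
      rw [heq]
      exact Subgroup.mem_sup_right (Subgroup.mem_zpowers g)
    refine ⟨E, Q, ?_, ?_, ?_, ?_, ?_, ?_, ?_⟩
    · refine ⟨fun n hn g => ?_⟩
      have : g * n * g⁻¹ = n := by
        have := (Subgroup.mem_center_iff.mp (hEC hn)) g⁻¹
        calc g * n * g⁻¹ = g * (n * g⁻¹) := by rw [mul_assoc]
          _ = g * (g⁻¹ * n) := by rw [← this]
          _ = n := by group
      rw [this]; exact hn
    · exact hQn
    · rw [inf_comm]; exact hQE
    · rw [sup_comm]; exact hQEsup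
    · intro h
      have : z ∈ (⊥ : Subgroup P) := h ▸ (⟨hzN, hzC⟩ : z ∈ E)
      rw [Subgroup.mem_bot] at this
      exact hz1 this
    · intro x hx y hy
      exact Subgroup.mem_center_iff.mp (hEC hy) x
    · intro x hx
      have h1 : x ^ p ∈ N := N.pow_mem (hEN hx) p
      have h2 : x ^ p ∈ frattini P := hpow x
      have : x ^ p ∈ N ⊓ frattini P := ⟨h1, h2⟩
      rw [hNfr, Subgroup.mem_bot] at this
      exact this
end

section
/- Let G be a finite group and X a subgroup of G with Φ(G) ≰ X. Then the Möbius function of the subgroup lattice of G satisfies μ(X, G) = 0. -/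
open IncidenceAlgebra Finset

/-- (Hawkes–Isaacs–Özaydin) If `X` is a subgroup of a finite group `G` with `Φ(G) ≰ X`,
then the Möbius function of the subgroup lattice of `G` satisfies `μ(X, G) = 0`. -/
theorem mu_subgroup_eq_zero_of_not_frattini_le {G : Type*} [Group G] [Finite G]
    [LocallyFiniteOrder (Subgroup G)] [DecidableEq (Subgroup G)]
    {X : Subgroup G} (h : ¬ frattini G ≤ X) :
    mu ℤ X (⊤ : Subgroup G) = 0 := by
  induction X using WellFoundedGT.induction with
  | _ X ih =>
  classical
  have hXne : X ≠ ⊤ := fun hX => h (hX ▸ le_top)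
  -- The join with the Frattini subgroup is proper.
  have hjoin : X ⊔ frattini G ≠ ⊤ := fun hj => hXne (frattini_nongenerating hj)
  -- Two telescoping sums vanish.
  have h1 : ∑ Y ∈ Icc X (⊤ : Subgroup G), mu ℤ Y (⊤ : Subgroup G) = 0 := by
    rw [sum_Icc_mu_left, if_neg hXne]
  have h2 : ∑ Y ∈ Icc (X ⊔ frattini G) (⊤ : Subgroup G), mu ℤ Y (⊤ : Subgroup G) = 0 := by
    rw [sum_Icc_mu_left, if_neg hjoin]
  -- Split the first sum according to whether `frattini G ≤ Y`.
  have hsplit : ∑ Y ∈ Icc X (⊤ : Subgroup G), mu ℤ Y (⊤ : Subgroup G)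
      = (∑ Y ∈ (Icc X (⊤ : Subgroup G)).filter (fun Y => frattini G ≤ Y),
          mu ℤ Y (⊤ : Subgroup G))
        + ∑ Y ∈ (Icc X (⊤ : Subgroup G)).filter (fun Y => ¬ frattini G ≤ Y),
          mu ℤ Y (⊤ : Subgroup G) :=
    (sum_filter_add_sum_filter_not _ _ _).symm
  -- The first part is the sum over `Icc (X ⊔ frattini G) ⊤`.
  have hfilter : (Icc X (⊤ : Subgroup G)).filter (fun Y => frattini G ≤ Y)
      = Icc (X ⊔ frattini G) (⊤ : Subgroup G) := by
    ext Y
    simp only [mem_filter, mem_Icc, le_top, and_true, sup_le_iff]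
  -- The second part reduces to the single term at `X`, by the inductive hypothesis.
  have hsecond : ∑ Y ∈ (Icc X (⊤ : Subgroup G)).filter (fun Y => ¬ frattini G ≤ Y),
      mu ℤ Y (⊤ : Subgroup G) = mu ℤ X (⊤ : Subgroup G) := by
    rw [Finset.sum_eq_single_of_mem X]
    · simp [mem_filter, mem_Icc, h]
    · intro Y hY hYX
      rw [mem_filter, mem_Icc] at hY
      exact ih Y (lt_of_le_of_ne hY.1.1 (Ne.symm hYX)) hY.2
  rw [hsplit, hfilter, h2, hsecond, zero_add] at h1
  exact h1
end

section
/- Let Q be a finite p-group. Write Q ≅ N × T where T is atoric (Ω₁Z(T) ≤ Φ(T)), N is elementary abelian with N ∩ Φ(Q) = 1, and let q : Q → T be the projection with kernel N. If K ⊴ Q is central, cyclic, contained in Φ(Q), then q(K) is a central cyclic subgroup of T contained in Φ(T), and the induced map Q/K → T/q(K) is surjective with kernel NK/K satisfying (NK/K) ∩ Φ(Q/K) = 1. -/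
section Aux

variable {G H : Type*} [Group G] [Group H]

lemma aux_isCoatom_map {φ : G →* H} (hφ : Function.Surjective φ) {M : Subgroup G}
    (hker : φ.ker ≤ M) (hM : IsCoatom M) : IsCoatom (Subgroup.map φ M) := by
  constructor
  · intro htop
    have h := congrArg (Subgroup.comap φ) htop
    rw [Subgroup.comap_map_eq, sup_of_le_left hker, Subgroup.comap_top] at h
    exact hM.1 h
  · intro B hB
    have h1 : Subgroup.comap φ (Subgroup.map φ M) = M := by
      rw [Subgroup.comap_map_eq, sup_of_le_left hker]
    have h2 : M < Subgroup.comap φ B := by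
      rw [← h1]
      exact (Subgroup.comap_lt_comap_of_surjective hφ).mpr hB
    have := hM.2 _ h2
    rw [← Subgroup.map_comap_eq_self_of_surjective hφ B, this, Subgroup.map_top_of_surjective φ hφ]

lemma aux_comap_frattini_le {φ : G →* H} (hφ : Function.Surjective φ)
    (hker : φ.ker ≤ frattini G) :
    Subgroup.comap φ (frattini H) ≤ frattini G := by
  rw [frattini, Order.radical]
  refine le_iInf fun M => le_iInf fun hM => ?_
  have hkerM : φ.ker ≤ M := hker.trans (frattini_le_coatom hM)
  have := frattini_le_coatom (aux_isCoatom_map hφ hkerM hM)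
  calc Subgroup.comap φ (frattini H) ≤ Subgroup.comap φ (Subgroup.map φ M) :=
        Subgroup.comap_mono this
    _ = M := by rw [Subgroup.comap_map_eq, sup_of_le_left hkerM]

end Aux

/-- Let `Q = N × T` be a finite `p`-group with `T` atoric, `N` elementary abelian and
`N ∩ Φ(Q) = 1`, and let `q : Q → T` be the projection with kernel `N`. If `K ⊴ Q` is
central, cyclic and contained in `Φ(Q)`, then `q(K)` is a central cyclic subgroup of `T`
contained in `Φ(T)`, and the induced map `Q/K → T/q(K)` is surjective with kernel `NK/K`
satisfying `(NK/K) ∩ Φ(Q/K) = 1`. -/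
theorem central_resolution_reduction {p : ℕ} [Fact p.Prime] {N T : Type*}
    [Group N] [Group T] [Finite N] [Finite T]
    (hNp : IsPGroup p N) (hTp : IsPGroup p T)
    (hNab : ∀ a b : N, a * b = b * a) (hNel : ∀ x : N, x ^ p = 1)
    (hTat : ∀ z ∈ Subgroup.center T, z ^ p = 1 → z ∈ frattini T)
    (hNfr : MonoidHom.ker (MonoidHom.snd N T) ⊓ frattini (N × T) = ⊥)
    (K : Subgroup (N × T)) [hK : K.Normal]
    (hKc : K ≤ Subgroup.center (N × T)) (hKcyc : IsCyclic ↥K)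
    (hKf : K ≤ frattini (N × T)) :
    Subgroup.map (MonoidHom.snd N T) K ≤ Subgroup.center T ∧
    IsCyclic ↥(Subgroup.map (MonoidHom.snd N T) K) ∧
    Subgroup.map (MonoidHom.snd N T) K ≤ frattini T ∧
    (Subgroup.map (MonoidHom.snd N T) K).Normal ∧
    (∀ (hmapn : (Subgroup.map (MonoidHom.snd N T) K).Normal),
      letI := hmapn
      ∃ f : (N × T) ⧸ K →* T ⧸ Subgroup.map (MonoidHom.snd N T) K,
        (∀ x : N × T, f (QuotientGroup.mk x) =
          QuotientGroup.mk (MonoidHom.snd N T x)) ∧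
        Function.Surjective f ∧
        f.ker = Subgroup.map (QuotientGroup.mk' K)
          (MonoidHom.ker (MonoidHom.snd N T) ⊔ K) ∧
        f.ker ⊓ frattini ((N × T) ⧸ K) = ⊥) := by
  set π := MonoidHom.snd N T with hπdef
  have hπs : Function.Surjective π := fun t => ⟨(1, t), rfl⟩
  -- centrality
  have h1 : Subgroup.map π K ≤ Subgroup.center T := by
    rintro t ⟨x, hx, rfl⟩
    rw [Subgroup.mem_center_iff]
    intro g
    exact congrArg Prod.snd ((Subgroup.mem_center_iff.mp (hKc hx)) (1, g))
  -- cyclic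
  have h2 : IsCyclic ↥(Subgroup.map π K) :=
    isCyclic_of_surjective _ (π.subgroupMap_surjective K)
  -- contained in Frattini
  have h3 : Subgroup.map π K ≤ frattini T := by
    rw [Subgroup.map_le_iff_le_comap]
    exact hKf.trans (frattini_le_comap_frattini_of_surjective hπs)
  -- normal
  have h4 : (Subgroup.map π K).Normal := by
    constructor
    intro n hn g
    have : g * n = n * g := (Subgroup.mem_center_iff.mp (h1 hn)) g
    rw [this, mul_assoc, mul_inv_cancel, mul_one]
    exact hn
  refine ⟨h1, h2, h3, h4, fun hmapn => ?_⟩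
  letI := hmapn
  have hle : K ≤ Subgroup.comap π (Subgroup.map π K) := Subgroup.le_comap_map π K
  refine ⟨QuotientGroup.map K (Subgroup.map π K) π hle, fun x => rfl, ?_, ?_, ?_⟩
  · -- surjectivity
    intro y
    obtain ⟨t, rfl⟩ := QuotientGroup.mk_surjective y
    obtain ⟨x, rfl⟩ := hπs t
    exact ⟨QuotientGroup.mk x, rfl⟩
  · -- kernel computation
    apply Subgroup.comap_injective (QuotientGroup.mk'_surjective K)
    have hc : (QuotientGroup.map K (Subgroup.map π K) π hle).comp (QuotientGroup.mk' K) =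
        (QuotientGroup.mk' (Subgroup.map π K)).comp π := MonoidHom.ext fun x => rfl
    calc Subgroup.comap (QuotientGroup.mk' K) (QuotientGroup.map K (Subgroup.map π K) π hle).ker
        = ((QuotientGroup.map K (Subgroup.map π K) π hle).comp (QuotientGroup.mk' K)).ker :=
          MonoidHom.comap_ker _ _
      _ = ((QuotientGroup.mk' (Subgroup.map π K)).comp π).ker := by rw [hc]
      _ = Subgroup.comap π (QuotientGroup.mk' (Subgroup.map π K)).ker :=
          (MonoidHom.comap_ker _ _).symm
      _ = Subgroup.comap π (Subgroup.map π K) := by rw [QuotientGroup.ker_mk']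
      _ = K ⊔ π.ker := by rw [Subgroup.comap_map_eq]
      _ = π.ker ⊔ K := sup_comm _ _
      _ = Subgroup.comap (QuotientGroup.mk' K)
            (Subgroup.map (QuotientGroup.mk' K) (π.ker ⊔ K)) := by
          rw [Subgroup.comap_map_eq, QuotientGroup.ker_mk', sup_of_le_left le_sup_right]
  · -- trivial intersection with Frattini
    rw [eq_bot_iff]
    intro q hq
    obtain ⟨hq1, hq2⟩ := Subgroup.mem_inf.mp hq
    obtain ⟨x, rfl⟩ := QuotientGroup.mk_surjective q
    have hx1 : π x ∈ Subgroup.map π K := by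
      rw [MonoidHom.mem_ker] at hq1
      rwa [show (QuotientGroup.map K (Subgroup.map π K) π hle) (QuotientGroup.mk x) =
        QuotientGroup.mk (π x) from rfl, QuotientGroup.eq_one_iff] at hq1
    obtain ⟨k, hk, hkx⟩ := hx1
    have hx2 : x ∈ frattini (N × T) := by
      have hker : (QuotientGroup.mk' K).ker ≤ frattini (N × T) := by
        rw [QuotientGroup.ker_mk']; exact hKf
      exact aux_comap_frattini_le (QuotientGroup.mk'_surjective K) hker hq2
    have hmem : x * k⁻¹ ∈ π.ker ⊓ frattini (N × T) := by
      refine Subgroup.mem_inf.mpr ⟨?_, ?_⟩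
      · show π (x * k⁻¹) = 1
        rw [map_mul, map_inv, hkx, mul_inv_cancel]
      · exact mul_mem hx2 (inv_mem (hKf hk))
    rw [hNfr, Subgroup.mem_bot, mul_inv_eq_one] at hmem
    rw [Subgroup.mem_bot, QuotientGroup.eq_one_iff]
    rw [hmem]
    exact hk
end
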